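/- Let d ≥ 1 and n : Fin d → ℕ with each n k ≥ 1, and let A : (∀ k : Fin d, Fin (n k)) → ℝ be a d-th order tensor. For 1 ≤ k ≤ d−1, let A_k denote the k-th unfolding of A, i.e. the matrix whose rows are indexed by the tuples (i_1,…,i_k) of the first k indices, whose columns are indexed by the tuples (i_{k+1},…,i_d) of the last d−k indices, and whose ((i_1,…,i_k),(i_{k+1},…,i_d)) entry is A(i_1,…,i_d). Then there exist ranks r_0, r_1, …, r_d with r_0 = r_d = 1 and r_k = rank(A_k) for 1 ≤ k ≤ d−1, and core tensors G_k : Fin r_{k-1} → Fin (n k) → Fin r_k → ℝ for k = 1,…,d, such that for all indices, A(i_1,…,i_d) = Σ_{α_0=1}^{r_0} Σ_{α_1=1}^{r_1} ⋯ Σ_{α_d=1}^{r_d} G_1(α_0,i_1,α_1) G_2(α_1,i_2,α_2) ⋯ G_d(α_{d-1},i_d,α_d). -/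

import Mathlib

set_option maxHeartbeats 2000000

/-- The `k`-th unfolding of a `d`-th order tensor `A`: the matrix whose rows are
indexed by the tuples of the first `k` indices, whose columns are indexed by the
tuples of the last `d − k` indices, and whose entries are the entries of `A`. -/
def ttUnfold {d : ℕ} {n : Fin d → ℕ} (A : (∀ i : Fin d, Fin (n i)) → ℝ) (k : ℕ) :
    Matrix ((i : {i : Fin d // i.val < k}) → Fin (n i.1))
      ((i : {i : Fin d // ¬ i.val < k}) → Fin (n i.1)) ℝ :=
  fun row col => A fun i => if h : i.val < k then row ⟨i, h⟩ else col ⟨i, h⟩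


open Matrix Module

section LinAlg
variable {m p q : Type*} [Fintype m] [Fintype p] [Fintype q] [DecidableEq m] [DecidableEq p]

/-- L2: left cancellation of a column-independent factor for rank. -/
theorem rank_mul_right_of_inj (B : Matrix m q ℝ) (C : Matrix q p ℝ)
    (hB : ∀ x, B.mulVec x = 0 → x = 0) : (B * C).rank = C.rank := by
  have hinj : Function.Injective B.mulVecLin := by
    intro x y h
    have h0 : B.mulVecLin (x - y) = 0 := by rw [map_sub, h, sub_self]
    exact sub_eq_zero.mp (hB _ h0)
  rw [Matrix.rank, Matrix.rank, Matrix.mulVecLin_mul, LinearMap.range_comp]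
  exact (LinearEquiv.finrank_eq
    (Submodule.equivMapOfInjective _ hinj (LinearMap.range C.mulVecLin))).symm

/-- L2': right cancellation of a surjective factor for rank. -/
theorem rank_mul_left_of_surj (B : Matrix m q ℝ) (C : Matrix q p ℝ)
    (hC : Function.Surjective C.mulVec) : (B * C).rank = B.rank := by
  have hsurj : Function.Surjective C.mulVecLin := hC
  rw [Matrix.rank, Matrix.rank, Matrix.mulVecLin_mul, LinearMap.range_comp,
    LinearMap.range_eq_top.mpr hsurj, Submodule.map_top]

/-- L1: rank factorization, with the extra property that equal columns
get equal coefficient columns, and that `B` has independent columns. -/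
theorem exists_rank_factorization (M : Matrix m p ℝ) :
    ∃ (B : Matrix m (Fin M.rank) ℝ) (C : Matrix (Fin M.rank) p ℝ),
      M = B * C ∧ (∀ x, B.mulVec x = 0 → x = 0) ∧
      (∀ j j' : p, (∀ i, M i j = M i j') → ∀ γ, C γ j = C γ j') := by
  classical
  set V := LinearMap.range M.mulVecLin with hV
  have hfr : finrank ℝ V = M.rank := rfl
  let b : Basis (Fin M.rank) ℝ V := (Module.finBasis ℝ V).reindex (finCongr hfr)
  have hcol : ∀ j : p, (fun i => M i j) ∈ V := by
    intro j
    refine ⟨Pi.single j 1, ?_⟩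
    funext i
    simp [Matrix.mulVecLin_apply, Matrix.mulVec, dotProduct, Pi.single_apply]
  refine ⟨fun i α => (b α : m → ℝ) i, fun α j => b.repr ⟨fun i => M i j, hcol j⟩ α, ?_, ?_, ?_⟩
  · funext i j
    have := b.sum_repr ⟨fun i => M i j, hcol j⟩
    have := congrArg (fun v : V => (v : m → ℝ) i) this
    show M i j = ∑ α, (b α : m → ℝ) i * b.repr ⟨fun i => M i j, hcol j⟩ α
    simp only [Submodule.coe_sum, Submodule.coe_smul, Finset.sum_apply, Pi.smul_apply, smul_eq_mul] at this
    rw [← this]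
    simp only [mul_comm]
  · intro x hx
    have h0 : (∑ α, x α • b α) = 0 := by
      apply Subtype.ext
      funext i
      have := congrFun hx i
      simp only [Matrix.mulVec, dotProduct, Pi.zero_apply] at this
      simpa [Submodule.coe_sum, Finset.sum_apply, mul_comm] using this
    have hli := b.linearIndependent
    rw [Fintype.linearIndependent_iff] at hli
    funext α; exact hli x h0 α
  · intro j j' hjj γ
    have : (⟨fun i => M i j, hcol j⟩ : V) = ⟨fun i => M i j', hcol j'⟩ := by
      apply Subtype.ext; funext i; exact hjj i
    simp only []
    rw [this]

end LinAlg

section Dup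
variable {d : ℕ} {n : Fin d → ℕ}

theorem ttUnfold_rank_eq_mix (hn : ∀ k, 1 ≤ n k) (A : (∀ j : Fin d, Fin (n j)) → ℝ) (k : ℕ) :
    (ttUnfold A k).rank =
      (Matrix.of fun i i' : ∀ j : Fin d, Fin (n j) =>
        A (fun j => if j.val < k then i j else i' j)).rank := by
  classical
  let res1 : (∀ j : Fin d, Fin (n j)) → ((i : {i : Fin d // i.val < k}) → Fin (n i.1)) := fun i j => i j.1
  let res2 : (∀ j : Fin d, Fin (n j)) → ((i : {i : Fin d // ¬ i.val < k}) → Fin (n i.1)) := fun i j => i j.1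
  let R : Matrix (∀ j : Fin d, Fin (n j)) ((i : {i : Fin d // i.val < k}) → Fin (n i.1)) ℝ :=
    fun i p => if p = res1 i then 1 else 0
  let C : Matrix ((i : {i : Fin d // ¬ i.val < k}) → Fin (n i.1)) (∀ j : Fin d, Fin (n j)) ℝ :=
    fun t i' => if t = res2 i' then 1 else 0
  have hRmul : ∀ (X : Matrix ((i : {i : Fin d // i.val < k}) → Fin (n i.1)) (∀ j : Fin d, Fin (n j)) ℝ) (i i' : ∀ j : Fin d, Fin (n j)),
      (R * X) i i' = X (res1 i) i' := by
    intro X i i'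
    rw [Matrix.mul_apply]
    simp [R, ite_mul]
  have hRinj : ∀ x, R.mulVec x = 0 → x = 0 := by
    intro x hx
    funext p
    have := congrFun hx (fun j => if h : j.val < k then p ⟨j, h⟩ else ⟨0, hn j⟩)
    rw [Matrix.mulVec, Pi.zero_apply] at this
    simp only [dotProduct, R, ite_mul, one_mul, zero_mul,
      Finset.sum_ite_eq', Finset.mem_univ, if_true] at this
    convert this using 2
    funext j
    simp [res1, dif_pos j.2]
    rfl
  have hCsurj : Function.Surjective C.mulVec := by
    intro z
    refine ⟨fun i' => if i' = (fun j => if h : j.val < k then ⟨0, hn j⟩ else (res2 i') ⟨j, h⟩)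
        then z (res2 i') else 0, ?_⟩
    funext t
    rw [Matrix.mulVec]
    rw [show dotProduct _ _ = ∑ i' : (∀ j : Fin d, Fin (n j)), (if t = res2 i' then (1:ℝ) else 0) *
      (if i' = (fun j => if h : j.val < k then ⟨0, hn j⟩ else (res2 i') ⟨j, h⟩)
        then z (res2 i') else 0) from rfl]
    have hres : res2 (fun j => if h : j.val < k then ⟨0, hn j⟩ else t ⟨j, h⟩) = t := by
      funext j
      simp [res2, dif_neg j.2]
    rw [Finset.sum_eq_single (fun j => if h : j.val < k then ⟨0, hn j⟩ else t ⟨j, h⟩)]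
    · rw [hres, if_pos rfl, if_pos]
      · rw [one_mul]
      · funext j
        by_cases h : j.val < k <;> simp [hres, h]
    · intro i' _ hne
      by_cases h1 : t = res2 i'
      · subst h1
        rw [if_pos rfl, one_mul, if_neg (fun hc => hne hc)]
      · rw [if_neg h1, zero_mul]
    · simp
  have key : (Matrix.of fun i i' : (∀ j : Fin d, Fin (n j)) =>
      A (fun j => if j.val < k then i j else i' j)) = R * (ttUnfold A k * C) := by
    ext i i'
    rw [hRmul]
    rw [Matrix.mul_apply]
    simp only [C, mul_ite, mul_one, mul_zero, Finset.sum_ite_eq', Finset.mem_univ, if_true]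
    show A _ = A _
    congr 1
    try (funext j; by_cases h : j.val < k <;> simp [res1, res2, h])
  rw [key, rank_mul_right_of_inj _ _ hRinj, rank_mul_left_of_surj _ _ hCsurj]

end Dup


section Split
variable {N : ℕ} (rr : Fin N → ℕ) (t : Fin N) (hrt : rr t = 1) (ρ : ℕ)

/-- Updating one coordinate of a dependent tuple type whose value there was `1`. -/
def splitEquiv : ((∀ j, Fin (rr j)) × Fin ρ) ≃ (∀ j, Fin (Function.update rr t ρ j)) where
  toFun p j := if h : j = t then Fin.cast (by rw [h, Function.update_self]) p.2
    else Fin.cast (Function.update_of_ne h ρ rr).symm (p.1 j)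
  invFun β := (fun j => if h : j = t then Fin.cast (by rw [h, hrt]) (⟨0, Nat.one_pos⟩ : Fin 1)
      else Fin.cast (Function.update_of_ne h ρ rr) (β j),
    Fin.cast (Function.update_self t ρ rr) (β t))
  left_inv p := by
    refine Prod.ext ?_ ?_
    · funext j
      by_cases h : j = t
      · subst h
        apply Fin.ext
        have h2 : ((p.1 j : ℕ)) < 1 := lt_of_lt_of_eq (p.1 j).isLt hrt
        simp only [dif_pos rfl, Fin.coe_cast]
        omega
      · simp only [dif_neg h]
        apply Fin.ext
        simp [Fin.coe_cast]
    · apply Fin.ext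
      simp [Fin.coe_cast, dif_pos rfl]
  right_inv β := by
    funext j
    by_cases h : j = t
    · subst h
      apply Fin.ext
      simp only [dif_pos rfl, eq_self_iff_true, dite_true, Fin.coe_cast]
    · simp only [dif_neg h]
      apply Fin.ext
      simp [Fin.coe_cast]

lemma val_splitEquiv_self (p : (∀ j, Fin (rr j)) × Fin ρ) :
    ((splitEquiv rr t hrt ρ p) t : ℕ) = p.2 := by
  simp [splitEquiv, dif_pos rfl, Fin.coe_cast]

lemma val_splitEquiv_ne (p : (∀ j, Fin (rr j)) × Fin ρ) {j : Fin N} (h : j ≠ t) :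
    ((splitEquiv rr t hrt ρ p) j : ℕ) = p.1 j := by
  simp [splitEquiv, dif_neg h, Fin.coe_cast]

end Split

theorem discrete_tensor_train_decomposition
    (d : ℕ) (hd : 1 ≤ d) (n : Fin d → ℕ) (hn : ∀ k, 1 ≤ n k)
    (A : (∀ k : Fin d, Fin (n k)) → ℝ) :
    ∃ (r : Fin (d + 1) → ℕ)
      (G : ∀ k : Fin d, Fin (r k.castSucc) → Fin (n k) → Fin (r k.succ) → ℝ),
      r 0 = 1 ∧ r (Fin.last d) = 1 ∧
      (∀ k : Fin (d + 1), 1 ≤ k.val → k.val ≤ d - 1 → r k = (ttUnfold A k.val).rank) ∧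
      (∀ i : ∀ k : Fin d, Fin (n k),
        A i = ∑ α : ∀ j : Fin (d + 1), Fin (r j),
          ∏ k : Fin d, G k (α k.castSucc) (i k) (α k.succ)) := by
  classical
  have key : ∀ (k : ℕ) (hk : k ≤ d),
      ∃ (rr : Fin (d+1) → ℕ)
        (G : ∀ j : Fin d, Fin (rr j.castSucc) → Fin (n j) → Fin (rr j.succ) → ℝ)
        (T : Fin (rr ⟨k, Nat.lt_succ_of_le hk⟩) → (∀ j : Fin d, Fin (n j)) → ℝ),
        rr 0 = 1 ∧
        rr (Fin.last d) = 1 ∧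
        (∀ j : Fin (d+1), k < j.val → rr j = 1) ∧
        (∀ j : Fin (d+1), 1 ≤ j.val → j.val ≤ k → j.val + 1 ≤ d →
          rr j = (ttUnfold A j.val).rank) ∧
        (∀ j : Fin d, k ≤ j.val → ∀ a y b, G j a y b = 1) ∧
        (∀ a (i i' : ∀ j : Fin d, Fin (n j)), (∀ j : Fin d, k ≤ j.val → i j = i' j) → T a i = T a i') ∧
        (∀ i : (∀ j : Fin d, Fin (n j)), A i = ∑ α : (∀ j : Fin (d+1), Fin (rr j)),
            (∏ j : Fin d, G j (α j.castSucc) (i j) (α j.succ)) *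
              T (α ⟨k, Nat.lt_succ_of_le hk⟩) i) ∧
        (k < d → ∀ x : Fin (rr ⟨k, Nat.lt_succ_of_le hk⟩) → ℝ,
            (∀ i : (∀ j : Fin d, Fin (n j)), ∑ α : (∀ j : Fin (d+1), Fin (rr j)),
              (∏ j : Fin d, G j (α j.castSucc) (i j) (α j.succ)) *
                x (α ⟨k, Nat.lt_succ_of_le hk⟩) = 0) → x = 0) ∧
        (k = d → ∀ a i, T a i = 1) := by
    intro k
    induction k with
    | zero =>
      intro hk
      refine ⟨fun _ => 1, fun _ _ _ _ => 1, fun _ i => A i, rfl, rfl, fun _ _ => rfl,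
        ?_, fun _ _ _ _ _ => rfl, ?_, ?_, ?_, ?_⟩
      · intro j h1 h2 _; omega
      · intro a i i' h
        exact congrArg A (funext fun j => h j (Nat.zero_le _))
      · intro i
        simp [Finset.prod_const_one, Finset.sum_const, Fintype.card_pi]
      · intro _ x hx
        funext b
        have h1 := hx (fun j => ⟨0, hn j⟩)
        rw [Finset.sum_congr rfl (fun α _ => by
          rw [Finset.prod_const_one, one_mul,
            Subsingleton.elim (α ⟨0, Nat.lt_succ_of_le hk⟩) b])] at h1
        rw [Finset.sum_const] at h1
        simpa [Fintype.card_pi] using h1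
      · intro h; omega
    | succ k IH =>
      intro hk1
      obtain ⟨rr, G, T, hc0, hcLast, hc1, hc2, hc3, hTinv, hc4, hc6, hc8⟩ :=
        IH (by omega)
      have prodInv : ∀ (i i' : ∀ j : Fin d, Fin (n j)),
          (∀ j : Fin d, j.val < k → i j = i' j) →
          ∀ α : (∀ j : Fin (d+1), Fin (rr j)),
            (∏ j : Fin d, G j (α j.castSucc) (i j) (α j.succ)) =
            ∏ j : Fin d, G j (α j.castSucc) (i' j) (α j.succ) := by
        intro i i' h α
        refine Finset.prod_congr rfl fun j _ => ?_
        by_cases hj : j.val < k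
        · rw [h j hj]
        · rw [hc3 j (by omega), hc3 j (by omega)]
      rcases Nat.lt_or_ge (k+1) d with hcase | hcase
      · -- main case: k+1 < d
        have hkdlt : k < d := by omega
        have hκ'1 : rr (⟨k+1, Nat.lt_succ_of_le hk1⟩ : Fin (d+1)) = 1 := hc1 _ (Nat.lt_succ_self k)
        let P : (∀ j : Fin d, Fin (n j)) → Fin (rr (⟨k, by omega⟩ : Fin (d+1))) → ℝ :=
          fun i β => ∑ α : (∀ j : Fin (d+1), Fin (rr j)),
            if α (⟨k, by omega⟩ : Fin (d+1)) = β then ∏ j : Fin d, G j (α j.castSucc) (i j) (α j.succ) else 0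
        have Psum : ∀ (i : ∀ j : Fin d, Fin (n j)) (x : Fin (rr (⟨k, by omega⟩ : Fin (d+1))) → ℝ),
            ∑ β, P i β * x β = ∑ α : (∀ j : Fin (d+1), Fin (rr j)),
              (∏ j : Fin d, G j (α j.castSucc) (i j) (α j.succ)) * x (α (⟨k, by omega⟩ : Fin (d+1))) := by
          intro i x
          simp only [P, Finset.sum_mul, ite_mul, zero_mul]
          rw [Finset.sum_comm]
          refine Finset.sum_congr rfl fun α _ => ?_
          rw [Finset.sum_ite_eq]
          simp
        have Pinv : ∀ (i i' : ∀ j : Fin d, Fin (n j)) β,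
            (∀ j : Fin d, (j : ℕ) < k → i j = i' j) → P i β = P i' β := by
          intro i i' β h
          refine Finset.sum_congr rfl fun α _ => ?_
          rw [prodInv i i' h α]
        have hc4P : ∀ i : (∀ j : Fin d, Fin (n j)), A i = ∑ β, P i β * T β i := by
          intro i
          rw [hc4 i]
          exact (Psum i fun β => T β i).symm
        have hc6P : ∀ x : Fin (rr (⟨k, by omega⟩ : Fin (d+1))) → ℝ,
            (∀ i : (∀ j : Fin d, Fin (n j)), ∑ β, P i β * x β = 0) → x = 0 := by
          intro x hx
          refine hc6 (by omega) x fun i => ?_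
          rw [← Psum i x]
          exact hx i
        let M : Matrix (Fin (rr (⟨k, by omega⟩ : Fin (d+1))) × Fin (n (⟨k, hkdlt⟩ : Fin d))) (∀ j : Fin d, Fin (n j)) ℝ :=
          fun p i => T p.1 (Function.update i (⟨k, hkdlt⟩ : Fin d) p.2)
        obtain ⟨B, Cm, hMBC, hBinj, hCdup⟩ := exists_rank_factorization M
        have hP'inj : ∀ x : (Fin (rr (⟨k, by omega⟩ : Fin (d+1))) × Fin (n (⟨k, hkdlt⟩ : Fin d))) → ℝ,
            (Matrix.of fun (i : ∀ j : Fin d, Fin (n j)) p =>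
              if p.2 = i (⟨k, hkdlt⟩ : Fin d) then P i p.1 else 0).mulVec x = 0 → x = 0 := by
          intro x hx
          have hz : ∀ z : Fin (n (⟨k, hkdlt⟩ : Fin d)), ∀ i : (∀ j : Fin d, Fin (n j)),
              ∑ b, P i b * x (b, z) = 0 := by
            intro z i
            have h0 := congrFun hx (Function.update i (⟨k, hkdlt⟩ : Fin d) z)
            rw [Matrix.mulVec, Pi.zero_apply] at h0
            simp only [dotProduct, Matrix.of_apply] at h0
            rw [Fintype.sum_prod_type] at h0
            simp only [Function.update_self, ite_mul, zero_mul, Finset.sum_ite_eq',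
              Finset.mem_univ, if_true] at h0
            rw [Finset.sum_congr rfl (fun b _ => by
              rw [Pinv (Function.update i (⟨k, hkdlt⟩ : Fin d) z) i b (fun j hj =>
                Function.update_of_ne (fun hc => by
                  have h2 : (j : ℕ) = k := by rw [hc]
                  omega) _ _)])] at h0
            exact h0
          funext p
          have h1 := congrFun (hc6P (fun b => x (b, p.2)) (hz p.2)) p.1
          simpa using h1
        have hAP : (Matrix.of fun i i' : ∀ j : Fin d, Fin (n j) =>
            A (fun j => if (j : ℕ) < k+1 then i j else i' j))
            = @HMul.hMul _ _ (Matrix (∀ j : Fin d, Fin (n j)) (∀ j : Fin d, Fin (n j)) ℝ) Matrix.instHMulOfFintypeOfMulOfAddCommMonoid (Matrix.of fun (i : ∀ j : Fin d, Fin (n j)) (p : Fin (rr (⟨k, by omega⟩ : Fin (d+1))) × Fin (n (⟨k, hkdlt⟩ : Fin d))) =>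
                if p.2 = i (⟨k, hkdlt⟩ : Fin d) then P i p.1 else 0) M := by
          ext i i'
          rw [Matrix.mul_apply]
          simp only [Matrix.of_apply]
          rw [Fintype.sum_prod_type]
          simp only [ite_mul, zero_mul, Finset.sum_ite_eq', Finset.mem_univ, if_true]
          rw [hc4P (fun j => if (j : ℕ) < k+1 then i j else i' j)]
          refine Finset.sum_congr rfl fun b _ => ?_
          rw [Pinv _ i b (fun j hj => if_pos (by omega))]
          congr 1
          refine hTinv b _ _ fun j hj => ?_
          by_cases hc : j = (⟨k, hkdlt⟩ : Fin d)
          · subst hc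
            rw [if_pos (Nat.lt_succ_self k), Function.update_self]
          · have hv : (j : ℕ) ≠ k := fun hv => hc (Fin.ext hv)
            rw [Function.update_of_ne hc, if_neg (by omega)]
        have hrank : M.rank = (ttUnfold A (k+1)).rank := by
          rw [ttUnfold_rank_eq_mix hn A (k+1), hAP, rank_mul_right_of_inj _ _ hP'inj]
        have hup : Function.update rr (⟨k+1, Nat.lt_succ_of_le hk1⟩ : Fin (d+1)) M.rank (⟨k+1, Nat.lt_succ_of_le hk1⟩ : Fin (d+1)) = M.rank :=
          Function.update_self _ _ _
        have hne1 : ∀ jj : Fin (d+1), jj ≠ (⟨k+1, Nat.lt_succ_of_le hk1⟩ : Fin (d+1)) →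
            Function.update rr (⟨k+1, Nat.lt_succ_of_le hk1⟩ : Fin (d+1)) M.rank jj = rr jj :=
          fun jj h => Function.update_of_ne h _ _
        have hTM : ∀ (β : Fin (rr (⟨k, by omega⟩ : Fin (d+1)))) (i : ∀ j : Fin d, Fin (n j)),
            T β i = ∑ γ, B (β, i (⟨k, hkdlt⟩ : Fin d)) γ * Cm γ i := by
          intro β i
          calc T β i = M (β, i (⟨k, hkdlt⟩ : Fin d)) i := by
                show T β i = T β (Function.update i (⟨k, hkdlt⟩ : Fin d) (i (⟨k, hkdlt⟩ : Fin d)))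
                rw [Function.update_eq_self]
            _ = (B * Cm) (β, i (⟨k, hkdlt⟩ : Fin d)) i := by conv_lhs => rw [hMBC]
            _ = ∑ γ, B (β, i (⟨k, hkdlt⟩ : Fin d)) γ * Cm γ i := Matrix.mul_apply
        have hprodEq : ∀ (α : ∀ j : Fin (d+1), Fin (rr j)) (γ : Fin M.rank)
            (i : ∀ j : Fin d, Fin (n j)),
            (∏ j : Fin d, (fun (j : Fin d) a y b =>
            if hlt : (j : ℕ) < k then
              G j (Fin.cast (hne1 j.castSucc (by
                  intro hc
                  have h2 : ((j.castSucc : Fin (d+1)) : ℕ) = k+1 := by rw [hc]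
                  rw [Fin.coe_castSucc] at h2
                  omega)) a) y
                (Fin.cast (hne1 j.succ (by
                  intro hc
                  have h2 : ((j.succ : Fin (d+1)) : ℕ) = k+1 := by rw [hc]
                  rw [Fin.val_succ] at h2
                  omega)) b)
            else if heq : (j : ℕ) = k then
              B (Fin.cast ((hne1 j.castSucc (by
                    intro hc
                    have h2 : ((j.castSucc : Fin (d+1)) : ℕ) = k+1 := by rw [hc]
                    rw [Fin.coe_castSucc] at h2
                    omega)).trans (congrArg rr (Fin.ext (show ((j.castSucc : Fin (d+1)) : ℕ) = k from heq)))) a,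
                 Fin.cast (congrArg n (Fin.ext (show (j : ℕ) = k from heq))) y)
                (Fin.cast ((congrArg (Function.update rr (⟨k+1, Nat.lt_succ_of_le hk1⟩ : Fin (d+1)) M.rank)
                    (Fin.ext (show ((j.succ : Fin (d+1)) : ℕ) = k+1 from by rw [Fin.val_succ, heq]))).trans hup) b)
            else 1) j (((splitEquiv rr (⟨k+1, Nat.lt_succ_of_le hk1⟩ : Fin (d+1)) hκ'1 M.rank) (α, γ)) j.castSucc) (i j) (((splitEquiv rr (⟨k+1, Nat.lt_succ_of_le hk1⟩ : Fin (d+1)) hκ'1 M.rank) (α, γ)) j.succ))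
            = (∏ j : Fin d, G j (α j.castSucc) (i j) (α j.succ)) * B (α (⟨k, by omega⟩ : Fin (d+1)), i (⟨k, hkdlt⟩ : Fin d)) γ := by
          intro α γ i
          rw [← Finset.mul_prod_erase Finset.univ _ (Finset.mem_univ (⟨k, hkdlt⟩ : Fin d)),
              ← Finset.mul_prod_erase Finset.univ
                (fun j => G j (α j.castSucc) (i j) (α j.succ)) (Finset.mem_univ (⟨k, hkdlt⟩ : Fin d))]
          rw [hc3 (⟨k, hkdlt⟩ : Fin d) (le_refl k), one_mul]
          have hfac : (fun (j : Fin d) a y b =>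
            if hlt : (j : ℕ) < k then
              G j (Fin.cast (hne1 j.castSucc (by
                  intro hc
                  have h2 : ((j.castSucc : Fin (d+1)) : ℕ) = k+1 := by rw [hc]
                  rw [Fin.coe_castSucc] at h2
                  omega)) a) y
                (Fin.cast (hne1 j.succ (by
                  intro hc
                  have h2 : ((j.succ : Fin (d+1)) : ℕ) = k+1 := by rw [hc]
                  rw [Fin.val_succ] at h2
                  omega)) b)
            else if heq : (j : ℕ) = k then
              B (Fin.cast ((hne1 j.castSucc (by
                    intro hc
                    have h2 : ((j.castSucc : Fin (d+1)) : ℕ) = k+1 := by rw [hc]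
                    rw [Fin.coe_castSucc] at h2
                    omega)).trans (congrArg rr (Fin.ext (show ((j.castSucc : Fin (d+1)) : ℕ) = k from heq)))) a,
                 Fin.cast (congrArg n (Fin.ext (show (j : ℕ) = k from heq))) y)
                (Fin.cast ((congrArg (Function.update rr (⟨k+1, Nat.lt_succ_of_le hk1⟩ : Fin (d+1)) M.rank)
                    (Fin.ext (show ((j.succ : Fin (d+1)) : ℕ) = k+1 from by rw [Fin.val_succ, heq]))).trans hup) b)
            else 1) (⟨k, hkdlt⟩ : Fin d) (((splitEquiv rr (⟨k+1, Nat.lt_succ_of_le hk1⟩ : Fin (d+1)) hκ'1 M.rank) (α, γ)) (Fin.castSucc (⟨k, hkdlt⟩ : Fin d))) (i (⟨k, hkdlt⟩ : Fin d))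
              (((splitEquiv rr (⟨k+1, Nat.lt_succ_of_le hk1⟩ : Fin (d+1)) hκ'1 M.rank) (α, γ)) (Fin.succ (⟨k, hkdlt⟩ : Fin d))) = B (α (⟨k, by omega⟩ : Fin (d+1)), i (⟨k, hkdlt⟩ : Fin d)) γ := by
            beta_reduce
            rw [dif_neg (lt_irrefl k), dif_pos (rfl : ((⟨k, hkdlt⟩ : Fin d) : ℕ) = k)]
            have e1 : Fin.cast ((hne1 (Fin.castSucc (⟨k, hkdlt⟩ : Fin d)) (by
                intro hc
                have h2 : ((Fin.castSucc (⟨k, hkdlt⟩ : Fin d) : Fin (d+1)) : ℕ) = k+1 := by rw [hc]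
                rw [Fin.coe_castSucc] at h2
                have h3 : ((⟨k, hkdlt⟩ : Fin d) : ℕ) = k := rfl
                omega)).trans (congrArg rr (Fin.ext (show ((Fin.castSucc (⟨k, hkdlt⟩ : Fin d) : Fin (d+1)) : ℕ) = k from rfl))))
                (((splitEquiv rr (⟨k+1, Nat.lt_succ_of_le hk1⟩ : Fin (d+1)) hκ'1 M.rank) (α, γ)) (Fin.castSucc (⟨k, hkdlt⟩ : Fin d))) = α (⟨k, by omega⟩ : Fin (d+1)) := by
              apply Fin.ext
              rw [Fin.coe_cast]
              exact val_splitEquiv_ne rr (⟨k+1, Nat.lt_succ_of_le hk1⟩ : Fin (d+1)) hκ'1 M.rank (α, γ) (by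
                intro hc
                have h2 : ((Fin.castSucc (⟨k, hkdlt⟩ : Fin d) : Fin (d+1)) : ℕ) = k+1 := by rw [hc]
                rw [Fin.coe_castSucc] at h2
                have h3 : ((⟨k, hkdlt⟩ : Fin d) : ℕ) = k := rfl
                omega)
            have e3 : Fin.cast ((congrArg (Function.update rr (⟨k+1, Nat.lt_succ_of_le hk1⟩ : Fin (d+1)) M.rank)
                (Fin.ext (show ((Fin.succ (⟨k, hkdlt⟩ : Fin d) : Fin (d+1)) : ℕ) = k+1 from by
                  rw [Fin.val_succ]))).trans hup)
                (((splitEquiv rr (⟨k+1, Nat.lt_succ_of_le hk1⟩ : Fin (d+1)) hκ'1 M.rank) (α, γ)) (Fin.succ (⟨k, hkdlt⟩ : Fin d))) = γ := by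
              apply Fin.ext
              rw [Fin.coe_cast]
              exact val_splitEquiv_self rr (⟨k+1, Nat.lt_succ_of_le hk1⟩ : Fin (d+1)) hκ'1 M.rank (α, γ)
            have e2 : Fin.cast (congrArg n (Fin.ext (show (((⟨k, hkdlt⟩ : Fin d) : Fin d) : ℕ) = k from rfl)))
                (i (⟨k, hkdlt⟩ : Fin d)) = i (⟨k, hkdlt⟩ : Fin d) := by
              apply Fin.ext
              rw [Fin.coe_cast]
            rw [e1, e2, e3]
          refine Eq.trans (congrArg₂ (· * ·) hfac (Finset.prod_congr rfl fun j hj => ?_)) (by ring)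
          have hjne : j ≠ (⟨k, hkdlt⟩ : Fin d) := Finset.ne_of_mem_erase hj
          have hvne : (j : ℕ) ≠ k := fun hv => hjne (Fin.ext hv)
          by_cases hlt : (j : ℕ) < k
          · beta_reduce
            rw [dif_pos hlt]
            rw [show Fin.cast (hne1 j.castSucc (by intro hc; have h2 : ((j.castSucc : Fin (d+1)) : ℕ) = k+1 := (by rw [hc]); rw [Fin.coe_castSucc] at h2; omega)) ((((splitEquiv rr (⟨k+1, Nat.lt_succ_of_le hk1⟩ : Fin (d+1)) hκ'1 M.rank)) (α, γ)) j.castSucc) = α j.castSucc from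
              Fin.ext (by rw [Fin.coe_cast]; exact val_splitEquiv_ne rr (⟨k+1, Nat.lt_succ_of_le hk1⟩ : Fin (d+1)) hκ'1 M.rank (α, γ) (by intro hc; have h2 : ((j.castSucc : Fin (d+1)) : ℕ) = k+1 := (by rw [hc]); rw [Fin.coe_castSucc] at h2; omega))]
            rw [show Fin.cast (hne1 j.succ (by intro hc; have h2 : ((j.succ : Fin (d+1)) : ℕ) = k+1 := (by rw [hc]); rw [Fin.val_succ] at h2; omega)) ((((splitEquiv rr (⟨k+1, Nat.lt_succ_of_le hk1⟩ : Fin (d+1)) hκ'1 M.rank)) (α, γ)) j.succ) = α j.succ from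
              Fin.ext (by rw [Fin.coe_cast]; exact val_splitEquiv_ne rr (⟨k+1, Nat.lt_succ_of_le hk1⟩ : Fin (d+1)) hκ'1 M.rank (α, γ) (by intro hc; have h2 : ((j.succ : Fin (d+1)) : ℕ) = k+1 := (by rw [hc]); rw [Fin.val_succ] at h2; omega))]
          · beta_reduce
            rw [dif_neg hlt, dif_neg hvne, hc3 j (by omega)]
        refine ⟨Function.update rr (⟨k+1, Nat.lt_succ_of_le hk1⟩ : Fin (d+1)) M.rank, fun (j : Fin d) a y b =>
            if hlt : (j : ℕ) < k then
              G j (Fin.cast (hne1 j.castSucc (by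
                  intro hc
                  have h2 : ((j.castSucc : Fin (d+1)) : ℕ) = k+1 := by rw [hc]
                  rw [Fin.coe_castSucc] at h2
                  omega)) a) y
                (Fin.cast (hne1 j.succ (by
                  intro hc
                  have h2 : ((j.succ : Fin (d+1)) : ℕ) = k+1 := by rw [hc]
                  rw [Fin.val_succ] at h2
                  omega)) b)
            else if heq : (j : ℕ) = k then
              B (Fin.cast ((hne1 j.castSucc (by
                    intro hc
                    have h2 : ((j.castSucc : Fin (d+1)) : ℕ) = k+1 := by rw [hc]
                    rw [Fin.coe_castSucc] at h2
                    omega)).trans (congrArg rr (Fin.ext (show ((j.castSucc : Fin (d+1)) : ℕ) = k from heq)))) a,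
                 Fin.cast (congrArg n (Fin.ext (show (j : ℕ) = k from heq))) y)
                (Fin.cast ((congrArg (Function.update rr (⟨k+1, Nat.lt_succ_of_le hk1⟩ : Fin (d+1)) M.rank)
                    (Fin.ext (show ((j.succ : Fin (d+1)) : ℕ) = k+1 from by rw [Fin.val_succ, heq]))).trans hup) b)
            else 1,
          fun γ i => Cm (Fin.cast hup γ) i,
          ?_, ?_, ?_, ?_, ?_, ?_, ?_, ?_, ?_⟩
        · rw [Function.update_of_ne (by
            intro hc
            have h2 : ((0 : Fin (d+1)) : ℕ) = k+1 := by rw [hc]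
            rw [Fin.val_zero] at h2
            omega)]
          exact hc0
        · rw [Function.update_of_ne (by
            intro hc
            have h2 : ((Fin.last d : Fin (d+1)) : ℕ) = k+1 := by rw [hc]
            rw [Fin.val_last] at h2
            omega)]
          exact hcLast
        · intro jj hjj
          rw [hne1 jj (by
            intro hc
            have h2 : (jj : ℕ) = k+1 := by rw [hc]
            omega)]
          exact hc1 jj (by omega)
        · intro jj h1 h2 h3
          by_cases hjk : (jj : ℕ) ≤ k
          · rw [hne1 jj (by
              intro hc
              have h4 : (jj : ℕ) = k+1 := by rw [hc]
              omega)]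
            exact hc2 jj h1 hjk h3
          · have hj2 : jj = (⟨k+1, Nat.lt_succ_of_le hk1⟩ : Fin (d+1)) := Fin.ext (show (jj : ℕ) = k+1 by omega)
            rw [hj2]
            exact hup.trans hrank
        · intro j hj a y b
          beta_reduce
          rw [dif_neg (by omega), dif_neg (by omega)]
        · intro a i i' h
          show Cm (Fin.cast hup a) i = Cm (Fin.cast hup a) i'
          refine hCdup i i' (fun p => ?_) _
          show T p.1 (Function.update i (⟨k, hkdlt⟩ : Fin d) p.2) = T p.1 (Function.update i' (⟨k, hkdlt⟩ : Fin d) p.2)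
          refine hTinv p.1 _ _ fun j hj => ?_
          by_cases hc : j = (⟨k, hkdlt⟩ : Fin d)
          · subst hc
            rw [Function.update_self, Function.update_self]
          · have hv : (j : ℕ) ≠ k := fun hv => hc (Fin.ext hv)
            rw [Function.update_of_ne hc, Function.update_of_ne hc]
            exact h j (by omega)
        · -- c4
          intro i
          rw [hc4 i, ← Equiv.sum_comp (splitEquiv rr (⟨k+1, Nat.lt_succ_of_le hk1⟩ : Fin (d+1)) hκ'1 M.rank), Fintype.sum_prod_type]
          refine Finset.sum_congr rfl fun α _ => ?_
          beta_reduce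
          rw [hTM _ i, Finset.mul_sum]
          refine Finset.sum_congr rfl fun γ _ => ?_
          rw [hprodEq α γ i]
          rw [show Fin.cast hup (((splitEquiv rr (⟨k+1, Nat.lt_succ_of_le hk1⟩ : Fin (d+1)) hκ'1 M.rank) (α, γ)) (⟨k+1, Nat.lt_succ_of_le hk1⟩ : Fin (d+1))) = γ from
            Fin.ext (by rw [Fin.coe_cast]; exact val_splitEquiv_self rr (⟨k+1, Nat.lt_succ_of_le hk1⟩ : Fin (d+1)) hκ'1 M.rank (α, γ))]
          ring
        · -- c6
          intro _ x hx
          have hx2 : ∀ i : (∀ j : Fin d, Fin (n j)), ∑ α : (∀ j : Fin (d+1), Fin (rr j)),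
              (∏ j : Fin d, G j (α j.castSucc) (i j) (α j.succ)) *
                (∑ γ, B (α (⟨k, by omega⟩ : Fin (d+1)), i (⟨k, hkdlt⟩ : Fin d)) γ * x (Fin.cast hup.symm γ)) = 0 := by
            intro i
            have h0 := hx i
            rw [← Equiv.sum_comp (splitEquiv rr (⟨k+1, Nat.lt_succ_of_le hk1⟩ : Fin (d+1)) hκ'1 M.rank), Fintype.sum_prod_type] at h0
            refine Eq.trans (Finset.sum_congr rfl fun α _ => ?_) h0
            beta_reduce
            rw [Finset.mul_sum]
            refine Finset.sum_congr rfl fun γ _ => ?_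
            rw [hprodEq α γ i]
            rw [show ((splitEquiv rr (⟨k+1, Nat.lt_succ_of_le hk1⟩ : Fin (d+1)) hκ'1 M.rank) (α, γ)) (⟨k+1, Nat.lt_succ_of_le hk1⟩ : Fin (d+1)) = Fin.cast hup.symm γ from
              Fin.ext (by
                rw [Fin.coe_cast]
                exact val_splitEquiv_self rr (⟨k+1, Nat.lt_succ_of_le hk1⟩ : Fin (d+1)) hκ'1 M.rank (α, γ))]
            ring
          have hyz : ∀ z : Fin (n (⟨k, hkdlt⟩ : Fin d)),
              (fun β => ∑ γ, B (β, z) γ * x (Fin.cast hup.symm γ)) = 0 := by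
            intro z
            refine hc6 (by omega) _ (fun i => ?_)
            have h0 := hx2 (Function.update i (⟨k, hkdlt⟩ : Fin d) z)
            refine Eq.trans (Eq.symm (Finset.sum_congr rfl (fun α _ => ?_))) h0
            rw [prodInv (Function.update i (⟨k, hkdlt⟩ : Fin d) z) i (fun j hj =>
                Function.update_of_ne (fun hc => by
                  have h2 : (j : ℕ) = k := by rw [hc]
                  omega) _ _) α]
            simp only [Function.update_self]
          have hBker : B.mulVec (fun γ => x (Fin.cast hup.symm γ)) = 0 := by
            funext p
            have h1 := congrFun (hyz p.2) p.1
            simp only [Pi.zero_apply] at h1 ⊢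
            rw [Matrix.mulVec]
            simpa [dotProduct] using h1
          have hx0 := hBinj _ hBker
          funext b
          have h1 := congrFun hx0 (Fin.cast hup b)
          simp only [Pi.zero_apply] at h1
          rw [show Fin.cast hup.symm (Fin.cast hup b) = b from
            Fin.ext (by simp [Fin.coe_cast])] at h1
          exact h1
        · intro h
          exact absurd h (by omega)
      · -- final case: k+1 = d
        have hkd1 : k + 1 = d := by omega
        have hkdlt : k < d := by omega
        refine ⟨rr, Function.update G ⟨k, hkdlt⟩
            (fun a y _ => T a (Function.update (fun j => ⟨0, hn j⟩) ⟨k, hkdlt⟩ y)),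
          fun _ _ => 1, hc0, hcLast, ?_, ?_, ?_, fun _ _ _ _ => rfl, ?_, ?_, fun _ _ _ => rfl⟩
        · intro j hj; exact hc1 j (by omega)
        · intro j h1 h2 h3; exact hc2 j h1 (by omega) h3
        · intro j hj a y b
          have hne : j ≠ ⟨k, hkdlt⟩ := by
            intro hc
            rw [hc] at hj
            have hv : ((⟨k, hkdlt⟩ : Fin d) : ℕ) = k := rfl
            omega
          rw [Function.update_of_ne hne]
          exact hc3 j (by omega) a y b
        · -- c4
          intro i
          rw [hc4 i]
          refine Finset.sum_congr rfl fun α _ => ?_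
          have h2 : (∏ j : Fin d, Function.update G ⟨k, hkdlt⟩
              (fun a y _ => T a (Function.update (fun j => ⟨0, hn j⟩) ⟨k, hkdlt⟩ y)) j
              (α j.castSucc) (i j) (α j.succ))
              = (∏ j ∈ Finset.univ.erase ⟨k, hkdlt⟩,
                  G j (α j.castSucc) (i j) (α j.succ)) * T (α ⟨k, by omega⟩) i := by
            rw [← Finset.mul_prod_erase Finset.univ _ (Finset.mem_univ ⟨k, hkdlt⟩)]
            simp only [Function.update_self]
            rw [mul_comm]
            congr 1
            · exact Finset.prod_congr rfl fun j hj => by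
                rw [Function.update_of_ne (Finset.ne_of_mem_erase hj)]
            · exact (hTinv _ _ _ fun j hj => by
                have hje : j = ⟨k, hkdlt⟩ := by
                  apply Fin.ext
                  have h1 := j.isLt
                  have h2 : ((⟨k, hkdlt⟩ : Fin d) : ℕ) = k := rfl
                  omega
                subst hje
                rw [Function.update_self]).symm
          rw [h2, ← Finset.mul_prod_erase Finset.univ
              (fun j => G j (α j.castSucc) (i j) (α j.succ)) (Finset.mem_univ ⟨k, hkdlt⟩),
            hc3 ⟨k, hkdlt⟩ (le_refl k), one_mul]
          exact (mul_one _).symm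
        · -- c6 vacuous
          intro h
          exact absurd h (by omega)
  obtain ⟨rr, G, T, hc0, hcLast, hc1, hc2, hc3, hTinv, hc4, hc6, hc8⟩ := key d le_rfl
  refine ⟨rr, G, hc0, hcLast, ?_, ?_⟩
  · intro j h1 h2
    exact hc2 j h1 (by omega) (by omega)
  · intro i
    rw [hc4 i]
    refine Finset.sum_congr rfl fun α _ => ?_
    rw [hc8 rfl, mul_one]
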